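/- arXiv:math/0211284 — 3 statements merged into one kernel-verified Lean document; each statement's English description precedes it below -/
import Mathlib

section
/- Let G be a (discrete) group. Then the anti-diagonal Γ_G = {(x, x⁻¹) : x ∈ G} belongs to the coset ring Ω(G × G) if and only if G has an abelian subgroup of finite index. -/
/-- The coset ring `Ω(G)` of a group `G`: the smallest family of subsets of `G` containing all
left cosets of subgroups and closed under finite unions, finite intersections, and
complementation. -/
def CosetRing (G : Type) [Group G] : Set (Set G) :=
  ⋂₀ { R : Set (Set G) |
        (∀ (H : Subgroup G) (x : G), (fun y => x * y) '' (H : Set G) ∈ R) ∧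
        (∀ s t : Set G, s ∈ R → t ∈ R → s ∪ t ∈ R) ∧
        (∀ s t : Set G, s ∈ R → t ∈ R → s ∩ t ∈ R) ∧
        (∀ s : Set G, s ∈ R → sᶜ ∈ R) }

/-- The anti-diagonal `Γ_G = {(x, x⁻¹) : x ∈ G}` of a group `G`. -/
def antiDiagonal (G : Type) [Group G] : Set (G × G) :=
  { p : G × G | p.2 = p.1⁻¹ }

open Pointwise

variable {X : Type*} [Group X]

lemma image_mul_eq_smul (x : X) (s : Set X) : (fun y => x * y) '' s = x • s := rfl

lemma coset_eq_of_mem {H : Subgroup X} {a c : X} (h : c ∈ a • (H : Set X)) :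
    a • (H : Set X) = c • (H : Set X) := by
  rw [Set.mem_smul_set_iff_inv_smul_mem] at h
  ext x
  simp only [Set.mem_smul_set_iff_inv_smul_mem, smul_eq_mul] at *
  constructor
  · intro hx
    have := H.mul_mem (H.inv_mem h) hx
    simpa [mul_assoc] using this
  · intro hx
    have := H.mul_mem h hx
    simpa [mul_assoc] using this

lemma coset_inter {H K : Subgroup X} {a b c : X} (h : c ∈ a • (H : Set X) ∩ b • (K : Set X)) :
    a • (H : Set X) ∩ b • (K : Set X) = c • ((H ⊓ K : Subgroup X) : Set X) := by
  rw [coset_eq_of_mem h.1, coset_eq_of_mem h.2]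
  ext x
  simp only [Set.mem_inter_iff, Set.mem_smul_set_iff_inv_smul_mem, Subgroup.mem_inf,
    Subgroup.coe_inf, Set.mem_inter_iff]


lemma mem_coset_trans {K : Subgroup X} {c g x : X} (hg : g ∈ c • (K : Set X))
    (hx : x ∈ c • (K : Set X)) : g⁻¹ * x ∈ K := by
  rw [Set.mem_smul_set_iff_inv_smul_mem, smul_eq_mul] at hg hx
  have := K.mul_mem (K.inv_mem hg) hx
  have h2 : (c⁻¹ * g)⁻¹ * (c⁻¹ * x) = g⁻¹ * x := by group
  rwa [h2] at this

lemma not_coset_subset_iUnion {ι : Type*} [Fintype ι] (H : Subgroup X) (K : ι → Subgroup X)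
    (hK : ∀ i, (K i).relIndex H = 0) (b : ι → X) (a : X) :
    ¬ (a • (H : Set X) ⊆ ⋃ i, b i • (K i : Set X)) := by
  classical
  intro hsub
  have hsub' : ∀ x : ↥H, ∃ i, (x : X) ∈ (a⁻¹ * b i) • (K i : Set X) := by
    intro x
    have : a * x ∈ a • (H : Set X) := ⟨x, x.2, rfl⟩
    obtain ⟨t, ht⟩ := Set.mem_iUnion.mp (hsub this)
    refine ⟨t, ?_⟩
    rw [Set.mem_smul_set_iff_inv_smul_mem, smul_eq_mul] at ht ⊢
    have h2 : (a⁻¹ * b t)⁻¹ * (x : X) = (b t)⁻¹ * (a * x) := by group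
    rwa [h2]
  set s : Finset ι :=
    Finset.univ.filter (fun i => ∃ h : ↥H, (h : X) ∈ (a⁻¹ * b i) • (K i : Set X)) with hs
  have hg : ∀ i : ι, ∃ g : ↥H, i ∈ s → (g : X) ∈ (a⁻¹ * b i) • (K i : Set X) := by
    intro i
    by_cases hi : i ∈ s
    · obtain ⟨h, hh⟩ := (Finset.mem_filter.mp hi).2
      exact ⟨h, fun _ => hh⟩
    · exact ⟨1, fun h => absurd h hi⟩
  choose g hgmem using hg
  have hcov : ⋃ i ∈ s, (g i) • (((K i).subgroupOf H : Subgroup ↥H) : Set ↥H) = Set.univ := by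
    ext x
    simp only [Set.mem_iUnion, Set.mem_univ, iff_true]
    obtain ⟨i, hi⟩ := hsub' x
    have his : i ∈ s := Finset.mem_filter.mpr ⟨Finset.mem_univ _, ⟨x, hi⟩⟩
    refine ⟨i, his, ?_⟩
    rw [Set.mem_smul_set_iff_inv_smul_mem, smul_eq_mul]
    rw [SetLike.mem_coe, Subgroup.mem_subgroupOf]
    push_cast
    exact mem_coset_trans (hgmem i his) hi
  obtain ⟨i, _, hfin⟩ := Subgroup.exists_finiteIndex_of_leftCoset_cover hcov
  exact hfin.index_ne_zero (hK i)

/-- A "basic" set: a left coset minus finitely many left cosets of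
infinite-index subgroups. -/
def IsBasic (S : Set X) : Prop :=
  ∃ (H : Subgroup X) (a : X) (n : ℕ) (K : Fin n → Subgroup X) (b : Fin n → X),
    (∀ i, K i ≤ H) ∧ (∀ i, (K i).relIndex H = 0) ∧
      S = a • (H : Set X) \ ⋃ i, b i • (K i : Set X)

def IsNF (S : Set X) : Prop :=
  ∃ Ps : Finset (Set X), (∀ P ∈ Ps, IsBasic P) ∧ S = ⋃₀ ↑Ps

lemma isNF_empty : IsNF (∅ : Set X) := ⟨∅, by simp, by simp⟩

lemma IsBasic.isNF {S : Set X} (h : IsBasic S) : IsNF S :=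
  ⟨{S}, by simpa using h, by simp⟩

lemma isBasic_coset (a : X) (H : Subgroup X) : IsBasic (a • (H : Set X)) :=
  ⟨H, a, 0, Fin.elim0, Fin.elim0, fun i => i.elim0, fun i => i.elim0, by simp⟩

lemma isNF_univ : IsNF (Set.univ : Set X) := by
  have := (isBasic_coset (1 : X) ⊤).isNF
  simpa using this

lemma IsNF.union {S T : Set X} (hS : IsNF S) (hT : IsNF T) : IsNF (S ∪ T) := by
  classical
  obtain ⟨P, hP, rfl⟩ := hS
  obtain ⟨Q, hQ, rfl⟩ := hT
  refine ⟨P ∪ Q, ?_, by rw [Finset.coe_union, Set.sUnion_union]⟩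
  intro R hR
  rcases Finset.mem_union.mp hR with h | h
  exacts [hP R h, hQ R h]

lemma isNF_biUnion {ι : Type*} (t : Finset ι) (f : ι → Set X)
    (h : ∀ i ∈ t, IsNF (f i)) : IsNF (⋃ i ∈ t, f i) := by
  classical
  induction t using Finset.induction_on with
  | empty => simpa using isNF_empty
  | insert a s hnotmem ih =>
    rw [Finset.set_biUnion_insert]
    exact (h a (Finset.mem_insert_self a s)).union
      (ih fun i hi => h i (Finset.mem_insert_of_mem hi))

lemma isNF_iUnion {ι : Type*} [Fintype ι] (f : ι → Set X)
    (h : ∀ i, IsNF (f i)) : IsNF (⋃ i, f i) := by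
  have := isNF_biUnion (Finset.univ : Finset ι) f (fun i _ => h i)
  simpa using this

lemma fin_iUnion_succAbove {n : ℕ} (f : Fin (n + 1) → Set X) (i : Fin (n + 1)) :
    ⋃ j, f j = f i ∪ ⋃ j : Fin n, f (i.succAbove j) := by
  ext x
  simp only [Set.mem_iUnion, Set.mem_union]
  constructor
  · rintro ⟨j, hj⟩
    rcases eq_or_ne j i with rfl | hne
    · exact Or.inl hj
    · obtain ⟨k, rfl⟩ := Fin.exists_succAbove_eq hne
      exact Or.inr ⟨k, hj⟩
  · rintro (h | ⟨k, hk⟩)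
    exacts [⟨i, h⟩, ⟨i.succAbove k, hk⟩]

lemma isNF_coset_diff :
    ∀ (n : ℕ) (H : Subgroup X) (a : X) (K : Fin n → Subgroup X) (b : Fin n → X),
      IsNF (a • (H : Set X) \ ⋃ i, b i • (K i : Set X)) := by
  intro n
  induction n using Nat.strong_induction_on with
  | _ n IH =>
  intro H a K b
  classical
  obtain _ | m := n
  · simpa [Set.iUnion_of_empty] using (isBasic_coset a H).isNF
  by_cases hA : ∀ i, ((b i • (K i : Set X)) ∩ (a • (H : Set X))).Nonempty
  · by_cases hB : ∀ i, ((K i) ⊓ H).relIndex H = 0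
    · -- all remaining cosets meet aH and have infinite relative index: basic set
      choose d hd using hA
      have hco : ∀ i, a • (H : Set X) ∩ b i • (K i : Set X)
          = d i • ((H ⊓ K i : Subgroup X) : Set X) := by
        intro i
        exact coset_inter ⟨(hd i).2, (hd i).1⟩
      have heq : a • (H : Set X) \ ⋃ i, b i • (K i : Set X)
          = a • (H : Set X) \ ⋃ i, d i • ((H ⊓ K i : Subgroup X) : Set X) := by
        ext x
        simp only [Set.mem_diff, Set.mem_iUnion, not_exists]
        refine and_congr_right fun hx => ?_
        refine forall_congr' fun i => ?_
        refine not_congr ?_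
        constructor
        · intro h
          rw [← hco i]; exact ⟨hx, h⟩
        · intro h
          rw [← hco i] at h; exact h.2
      rw [heq]
      refine IsBasic.isNF ⟨H, a, m + 1, (fun i => H ⊓ K i), d, fun i => inf_le_left,
        fun i => by simpa [inf_comm] using hB i, rfl⟩
    · -- some K i has finite relative index: split the big coset
      push_neg at hB
      obtain ⟨i, hi⟩ := hB
      set L : Subgroup X := K i ⊓ H with hL
      haveI : Fintype (↥H ⧸ L.subgroupOf H) := Subgroup.fintypeOfIndexNeZero hi
      set c : (↥H ⧸ L.subgroupOf H) → X := fun q => a * ((Quotient.out q : ↥H) : X) with hc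
      have hcover : a • (H : Set X) = ⋃ q, c q • (L : Set X) := by
        ext x
        simp only [Set.mem_iUnion]
        constructor
        · rintro ⟨h, hh, rfl⟩
          set q0 : ↥H ⧸ L.subgroupOf H := QuotientGroup.mk (⟨h, hh⟩ : ↥H) with hq0
          refine ⟨q0, ?_⟩
          rw [Set.mem_smul_set_iff_inv_smul_mem, smul_eq_mul]
          have hrel : (Quotient.out q0)⁻¹ * (⟨h, hh⟩ : ↥H) ∈ L.subgroupOf H := by
            have h3 : (QuotientGroup.mk (Quotient.out q0) : ↥H ⧸ L.subgroupOf H) = q0 :=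
              QuotientGroup.out_eq' q0
            rw [hq0] at h3
            exact QuotientGroup.eq.mp h3
          rw [Subgroup.mem_subgroupOf] at hrel
          show (c q0)⁻¹ * (a * h) ∈ (L : Set X)
          have hceq : (c q0)⁻¹ * (a * h)
              = ((Quotient.out q0 : ↥H) : X)⁻¹ * h := by
            simp only [hc]
            group
          rw [hceq]
          exact_mod_cast hrel
        · rintro ⟨q, hq⟩
          rw [Set.mem_smul_set_iff_inv_smul_mem, smul_eq_mul] at hq ⊢
          have h1 : ((Quotient.out q : ↥H) : X) ∈ H := (Quotient.out q).2
          have h2 : (c q)⁻¹ * x ∈ H := by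
            have hq' : (c q)⁻¹ * x ∈ L := SetLike.mem_coe.mp hq
            rw [hL, Subgroup.mem_inf] at hq'
            exact hq'.2
          have : a⁻¹ * x = ((Quotient.out q : ↥H) : X) * ((c q)⁻¹ * x) := by
            simp only [hc]; group
          rw [this]
          exact H.mul_mem h1 h2
      rw [hcover, Set.iUnion_diff]
      refine isNF_iUnion _ fun q => ?_
      by_cases hq : c q ∈ b i • (K i : Set X)
      · have hsub1 : c q • (L : Set X) ⊆ b i • (K i : Set X) := by
          rw [coset_eq_of_mem hq]
          exact Set.smul_set_mono (by exact_mod_cast inf_le_left)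
        have : c q • (L : Set X) \ ⋃ j, b j • (K j : Set X) = ∅ := by
          ext x
          simp only [Set.mem_diff, Set.mem_iUnion, not_exists, Set.mem_empty_iff_false,
            iff_false, not_and, not_forall]
          intro hx
          exact ⟨i, by simpa using hsub1 hx⟩
        rw [this]; exact isNF_empty
      · have hdis : ∀ x, x ∈ c q • (L : Set X) → x ∉ b i • (K i : Set X) := by
          intro x hx hx'
          have hx2 : x ∈ c q • ((K i : Subgroup X) : Set X) :=
            Set.smul_set_mono (by exact_mod_cast (inf_le_left : K i ⊓ H ≤ K i)) hx
          have : c q • ((K i : Subgroup X) : Set X) = b i • (K i : Set X) := by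
            rw [coset_eq_of_mem hx2, coset_eq_of_mem hx']
          apply hq
          rw [← this]
          exact ⟨1, (K i).one_mem, by simp⟩
        have heq : c q • (L : Set X) \ ⋃ j, b j • (K j : Set X)
            = c q • (L : Set X) \ ⋃ j : Fin m, b (i.succAbove j) • (K (i.succAbove j) : Set X) := by
          rw [fin_iUnion_succAbove (fun j => b j • (K j : Set X)) i]
          ext x
          simp only [Set.mem_diff, Set.mem_union, Set.mem_iUnion, not_exists, not_or]
          constructor
          · rintro ⟨hx, _, h2⟩; exact ⟨hx, h2⟩
          · rintro ⟨hx, h2⟩; exact ⟨hx, hdis x hx, h2⟩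
        rw [heq]
        exact IH m (Nat.lt_succ_self m) L (c q) _ _
  · -- some subtracted coset misses a • H : drop it
    push_neg at hA
    obtain ⟨i, hi⟩ := hA
    have heq : a • (H : Set X) \ ⋃ j, b j • (K j : Set X)
        = a • (H : Set X) \ ⋃ j : Fin m, b (i.succAbove j) • (K (i.succAbove j) : Set X) := by
      rw [fin_iUnion_succAbove (fun j => b j • (K j : Set X)) i]
      ext x
      simp only [Set.mem_diff, Set.mem_union, Set.mem_iUnion, not_exists, not_or]
      constructor
      · rintro ⟨hx, _, h2⟩; exact ⟨hx, h2⟩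
      · rintro ⟨hx, h2⟩
        refine ⟨hx, fun hmem => ?_, h2⟩
        have : x ∈ (b i • (K i : Set X)) ∩ (a • (H : Set X)) := ⟨hmem, hx⟩
        rw [hi] at this
        exact this
    rw [heq]
    exact IH m (Nat.lt_succ_self m) H a _ _

omit [Group X] in
lemma fin_iUnion_append2 {m n : ℕ} {α β : Type*} (b : Fin m → α) (b' : Fin n → α)
    (K : Fin m → β) (K' : Fin n → β) (F : α → β → Set X) :
    ⋃ i : Fin (m + n), F (Fin.append b b' i) (Fin.append K K' i)
      = (⋃ i, F (b i) (K i)) ∪ ⋃ i, F (b' i) (K' i) := by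
  ext x
  simp only [Set.mem_iUnion, Set.mem_union]
  constructor
  · rintro ⟨i, hi⟩
    refine Fin.addCases (fun j hj => ?_) (fun j hj => ?_) i hi
    · rw [Fin.append_left, Fin.append_left] at hj; exact Or.inl ⟨j, hj⟩
    · rw [Fin.append_right, Fin.append_right] at hj; exact Or.inr ⟨j, hj⟩
  · rintro (⟨j, hj⟩ | ⟨j, hj⟩)
    · exact ⟨Fin.castAdd n j, by rwa [Fin.append_left, Fin.append_left]⟩
    · exact ⟨Fin.natAdd m j, by rwa [Fin.append_right, Fin.append_right]⟩

lemma IsBasic.inter_isNF {S T : Set X} (hS : IsBasic S) (hT : IsBasic T) : IsNF (S ∩ T) := by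
  obtain ⟨H, a, n, K, b, -, -, rfl⟩ := hS
  obtain ⟨H', a', n', K', b', -, -, rfl⟩ := hT
  have heq : (a • (H : Set X) \ ⋃ i, b i • (K i : Set X)) ∩
      (a' • (H' : Set X) \ ⋃ i, b' i • (K' i : Set X)) =
      (a • (H : Set X) ∩ a' • (H' : Set X)) \
        ((⋃ i, b i • (K i : Set X)) ∪ ⋃ i, b' i • (K' i : Set X)) := by
    ext x
    simp only [Set.mem_inter_iff, Set.mem_diff, Set.mem_union]
    tauto
  rw [heq]
  rcases Set.eq_empty_or_nonempty (a • (H : Set X) ∩ a' • (H' : Set X)) with he | ⟨c, hc⟩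
  · rw [he]
    simpa using isNF_empty
  · rw [coset_inter hc,
      ← fin_iUnion_append2 b b' (fun i => ((K i : Set X))) (fun i => ((K' i : Set X)))
        (fun u v => u • v)]
    have hconv : ∀ i : Fin (n + n'),
        (Fin.append (fun j => ((K j : Set X))) (fun j => ((K' j : Set X))) i)
        = ((Fin.append K K' i : Subgroup X) : Set X) := by
      intro i
      refine Fin.addCases (fun j => ?_) (fun j => ?_) i
      · rw [Fin.append_left, Fin.append_left]
      · rw [Fin.append_right, Fin.append_right]
    simp only [hconv]
    exact isNF_coset_diff _ (H ⊓ H') c (Fin.append K K') (Fin.append b b')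

lemma IsNF.inter {S T : Set X} (hS : IsNF S) (hT : IsNF T) : IsNF (S ∩ T) := by
  classical
  obtain ⟨P, hP, rfl⟩ := hS
  obtain ⟨Q, hQ, rfl⟩ := hT
  have heq : (⋃₀ ↑P : Set X) ∩ ⋃₀ ↑Q = ⋃ p ∈ P, ⋃ q ∈ Q, (p ∩ q) := by
    ext x
    simp only [Set.mem_inter_iff, Set.mem_sUnion, Set.mem_iUnion, Finset.mem_coe]
    constructor
    · rintro ⟨⟨p, hp, hxp⟩, ⟨q, hq, hxq⟩⟩
      exact ⟨p, hp, q, hq, hxp, hxq⟩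
    · rintro ⟨p, hp, q, hq, hxp, hxq⟩
      exact ⟨⟨p, hp, hxp⟩, ⟨q, hq, hxq⟩⟩
  rw [heq]
  refine isNF_biUnion P _ fun p hp => isNF_biUnion Q _ fun q hq => ?_
  exact (hP p hp).inter_isNF (hQ q hq)

lemma IsBasic.compl_isNF {S : Set X} (hS : IsBasic S) : IsNF Sᶜ := by
  obtain ⟨H, a, n, K, b, -, -, rfl⟩ := hS
  have heq : (a • (H : Set X) \ ⋃ i, b i • (K i : Set X))ᶜ
      = (a • (H : Set X))ᶜ ∪ ⋃ i, b i • (K i : Set X) := by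
    ext x
    simp only [Set.mem_compl_iff, Set.mem_diff, Set.mem_union, Set.mem_iUnion, not_and, not_not,
      not_forall, not_exists]
    tauto
  rw [heq]
  have h1 : IsNF ((a • (H : Set X))ᶜ) := by
    have : (a • (H : Set X))ᶜ
        = (1 : X) • ((⊤ : Subgroup X) : Set X) \ ⋃ _i : Fin 1, a • (H : Set X) := by
      simp [Set.compl_eq_univ_diff, Set.iUnion_const]
    rw [this]
    exact isNF_coset_diff 1 ⊤ 1 (fun _ => H) (fun _ => a)
  refine h1.union (isNF_iUnion _ fun i => (isBasic_coset (b i) (K i)).isNF)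

lemma IsNF.compl {S : Set X} (hS : IsNF S) : IsNF Sᶜ := by
  classical
  obtain ⟨P, hP, rfl⟩ := hS
  induction P using Finset.induction_on with
  | empty => simpa using isNF_univ
  | insert p Q hnotmem ih =>
    have heq : (⋃₀ ↑(insert p Q) : Set X)ᶜ = pᶜ ∩ (⋃₀ ↑Q : Set X)ᶜ := by
      rw [Finset.coe_insert, Set.sUnion_insert, Set.compl_union]
    rw [heq]
    exact ((hP p (Finset.mem_insert_self p Q)).compl_isNF).inter
      (ih fun q hq => hP q (Finset.mem_insert_of_mem hq))

lemma isNF_of_mem_cosetRing {G : Type} [Group G] {S : Set G} (h : S ∈ CosetRing G) : IsNF S := by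
  refine h {T : Set G | IsNF T} ⟨?_, ?_, ?_, ?_⟩
  · intro H x
    rw [image_mul_eq_smul]
    exact (isBasic_coset x H).isNF
  · exact fun s t hs ht => hs.union ht
  · exact fun s t hs ht => hs.inter ht
  · exact fun s hs => hs.compl

lemma map_conj_self {H : Subgroup X} {u : X} (hu : u ∈ H) :
    H.map (MulAut.conj u).toMonoidHom = H := by
  ext x
  simp only [Subgroup.mem_map, MulEquiv.coe_toMonoidHom, MulAut.conj_apply]
  constructor
  · rintro ⟨y, hy, rfl⟩
    exact H.mul_mem (H.mul_mem hu hy) (H.inv_mem hu)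
  · intro hx
    refine ⟨u⁻¹ * x * u, H.mul_mem (H.mul_mem (H.inv_mem hu) hx) hu, by group⟩

lemma relindex_conj {H K : Subgroup X} {u : X} (hu : u ∈ H) :
    (K.map (MulAut.conj u).toMonoidHom).relIndex H = K.relIndex H := by
  have hhom : (MulAut.conj u).symm.toMonoidHom = (MulAut.conj u⁻¹).toMonoidHom := by
    ext x
    simp [MulAut.conj_symm_apply, MulAut.conj_apply]
  rw [Subgroup.map_equiv_eq_comap_symm', Subgroup.relIndex_comap, hhom,
    map_conj_self (H.inv_mem hu)]

lemma mem_coset_translate {K : Subgroup X} {cb u : X} (x : X) :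
    x * u ∈ cb • (K : Set X) ↔
      x ∈ (cb * u⁻¹) • ((K.map (MulAut.conj u).toMonoidHom : Subgroup X) : Set X) := by
  rw [Set.mem_smul_set_iff_inv_smul_mem, Set.mem_smul_set_iff_inv_smul_mem, smul_eq_mul,
    smul_eq_mul]
  constructor
  · intro h
    refine SetLike.mem_coe.mpr ?_
    refine Subgroup.mem_map.mpr ⟨cb⁻¹ * (x * u), h, ?_⟩
    simp only [MulEquiv.coe_toMonoidHom, MulAut.conj_apply]
    group
  · intro h
    obtain ⟨y, hy, hyx⟩ := Subgroup.mem_map.mp (SetLike.mem_coe.mp h)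
    simp only [MulEquiv.coe_toMonoidHom, MulAut.conj_apply] at hyx
    have : cb⁻¹ * (x * u) = y := by
      have h2 : x = (cb * u⁻¹) * (u * y * u⁻¹) := by rw [hyx]; group
      rw [h2]; group
    rw [this]
    exact hy

lemma abelian_of_basic_subset_antiDiagonal {G : Type} [Group G]
    {H : Subgroup (G × G)} {n : ℕ} {K : Fin n → Subgroup (G × G)} {b : Fin n → G × G}
    (hrel : ∀ i, (K i).relIndex H = 0) {c : G × G} (hc : c ∈ antiDiagonal G)
    (hsub : c • (H : Set (G × G)) \ ⋃ i, b i • (K i : Set (G × G)) ⊆ antiDiagonal G) :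
    ∀ x ∈ H.map (MonoidHom.fst G G), ∀ y ∈ H.map (MonoidHom.fst G G), x * y = y * x := by
  classical
  set T : Set (G × G) := {h | h ∈ H ∧ ∀ i, c * h ∉ b i • (K i : Set (G × G))} with hTdef
  -- elements of T satisfy the "anti-affine" relation
  have hTprod : ∀ h ∈ T, h.2 = c.1 * h.1⁻¹ * c.1⁻¹ := by
    rintro h ⟨hh, hni⟩
    have h1 : c * h ∈ c • (H : Set (G × G)) := ⟨h, hh, rfl⟩
    have h2 : c * h ∈ antiDiagonal G := hsub ⟨h1, by simpa using hni⟩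
    have h3 : c.2 * h.2 = (c.1 * h.1)⁻¹ := h2
    have h4 : c.2 = c.1⁻¹ := hc
    rw [h4] at h3
    have : h.2 = c.1 * (c.1 * h.1)⁻¹ := by rw [← h3]; group
    rw [this]; group
  -- commuting rule
  have hR : ∀ h h', h ∈ T → h' ∈ T → h * h' ∈ T → h.1 * h'.1 = h'.1 * h.1 := by
    intro h h' hh hh' hhh
    have e1 := hTprod h hh
    have e2 := hTprod h' hh'
    have e3 := hTprod (h * h') hhh
    have e4 : (h * h').2 = h.2 * h'.2 := rfl
    have e5 : (h * h').1 = h.1 * h'.1 := rfl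
    rw [e4, e1, e2, e5] at e3
    have e6 : (h.1 * h'.1)⁻¹ = h.1⁻¹ * h'.1⁻¹ := by
      have h7 : c.1⁻¹ * (c.1 * h.1⁻¹ * c.1⁻¹ * (c.1 * h'.1⁻¹ * c.1⁻¹)) * c.1
          = c.1⁻¹ * (c.1 * (h.1 * h'.1)⁻¹ * c.1⁻¹) * c.1 := by rw [e3]
      calc (h.1 * h'.1)⁻¹ = c.1⁻¹ * (c.1 * (h.1 * h'.1)⁻¹ * c.1⁻¹) * c.1 := by group
        _ = c.1⁻¹ * (c.1 * h.1⁻¹ * c.1⁻¹ * (c.1 * h'.1⁻¹ * c.1⁻¹)) * c.1 := h7.symm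
        _ = h.1⁻¹ * h'.1⁻¹ := by group
    calc h.1 * h'.1 = ((h.1 * h'.1)⁻¹)⁻¹ := by group
      _ = (h.1⁻¹ * h'.1⁻¹)⁻¹ := by rw [e6]
      _ = h'.1 * h.1 := by group
  -- largeness: good translates exist
  have hgood : ∀ u : Fin 3 → G × G, (∀ j, u j ∈ H) →
      ∃ k, k ∈ T ∧ ∀ j, k * u j ∈ T := by
    intro u hu
    set K' : Option (Fin 3) × Fin n → Subgroup (G × G) := fun p =>
      match p.1 with
      | none => K p.2
      | some j => (K p.2).map (MulAut.conj (u j)).toMonoidHom with hK'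
    set bb : Option (Fin 3) × Fin n → G × G := fun p =>
      match p.1 with
      | none => c⁻¹ * b p.2
      | some j => c⁻¹ * b p.2 * (u j)⁻¹ with hbb
    have hrel' : ∀ p, (K' p).relIndex H = 0 := by
      rintro ⟨j?, i⟩
      cases j? with
      | none => exact hrel i
      | some j => exact (relindex_conj (hu j)).trans (hrel i)
    have hnot := not_coset_subset_iUnion H K' hrel' bb 1
    rw [Set.not_subset] at hnot
    obtain ⟨k, hkH, hknot⟩ := hnot
    have hkH' : k ∈ H := by simpa using hkH
    simp only [Set.mem_iUnion, not_exists] at hknot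
    have hbase : ∀ i, c * k ∉ b i • (K i : Set (G × G)) := by
      intro i hmem
      apply hknot (none, i)
      show k ∈ (c⁻¹ * b i) • (K i : Set (G × G))
      rw [Set.mem_smul_set_iff_inv_smul_mem, smul_eq_mul] at hmem ⊢
      have : (c⁻¹ * b i)⁻¹ * k = (b i)⁻¹ * (c * k) := by group
      rw [this]; exact hmem
    have htrans : ∀ j i, c * (k * u j) ∉ b i • (K i : Set (G × G)) := by
      intro j i hmem
      apply hknot (some j, i)
      show k ∈ (c⁻¹ * b i * (u j)⁻¹) •
        (((K i).map (MulAut.conj (u j)).toMonoidHom : Subgroup (G × G)) : Set (G × G))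
      have h1 : (c * k) * u j ∈ b i • (K i : Set (G × G)) := by
        rw [mul_assoc]; exact hmem
      rw [mem_coset_translate] at h1
      rw [Set.mem_smul_set_iff_inv_smul_mem, smul_eq_mul] at h1 ⊢
      have : (c⁻¹ * b i * (u j)⁻¹)⁻¹ * k = (b i * (u j)⁻¹)⁻¹ * (c * k) := by group
      rw [this]; exact h1
    refine ⟨k, ⟨hkH', hbase⟩, fun j => ⟨H.mul_mem hkH' (hu j), fun i => htrans j i⟩⟩
  -- the set of first coordinates of T
  set S : Set G := Prod.fst '' T with hS
  have hcomm : ∀ a ∈ S, ∀ a' ∈ S, a * a' = a' * a := by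
    rintro a ⟨h, hh, rfl⟩ a' ⟨h', hh', rfl⟩
    obtain ⟨k, hk, hku⟩ := hgood ![h, h', h * h'] (by
      intro j
      fin_cases j
      exacts [hh.1, hh'.1, H.mul_mem hh.1 hh'.1])
    have hk0 : k * h ∈ T := hku 0
    have hk1 : k * h' ∈ T := hku 1
    have hk2 : k * (h * h') ∈ T := by simpa using hku 2
    have r1 : k.1 * h'.1 = h'.1 * k.1 := hR k h' hk hh' hk1
    have r2 : (k * h).1 * h'.1 = h'.1 * (k * h).1 := by
      refine hR (k * h) h' hk0 hh' ?_
      rw [mul_assoc]; exact hk2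
    have e5 : (k * h).1 = k.1 * h.1 := rfl
    rw [e5] at r2
    have e7 : k.1 * (h.1 * h'.1) = k.1 * (h'.1 * h.1) := by
      calc k.1 * (h.1 * h'.1) = k.1 * h.1 * h'.1 := by rw [mul_assoc]
        _ = h'.1 * (k.1 * h.1) := r2
        _ = h'.1 * k.1 * h.1 := by rw [mul_assoc]
        _ = k.1 * h'.1 * h.1 := by rw [← r1]
        _ = k.1 * (h'.1 * h.1) := by rw [mul_assoc]
    exact mul_left_cancel e7
  have hgen : ∀ h ∈ H, (h : G × G).1 ∈ Subgroup.closure S := by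
    intro h hh
    obtain ⟨k, hk, hku⟩ := hgood ![h, h, h] (by intro j; fin_cases j <;> exact hh)
    have hk0 : k * h ∈ T := hku 0
    have h1 : k.1 ∈ S := ⟨k, hk, rfl⟩
    have h2 : (k * h).1 ∈ S := ⟨k * h, hk0, rfl⟩
    have : h.1 = k.1⁻¹ * (k * h).1 := by
      have : (k * h).1 = k.1 * h.1 := rfl
      rw [this]; group
    rw [this]
    exact Subgroup.mul_mem _ (Subgroup.inv_mem _ (Subgroup.subset_closure h1))
      (Subgroup.subset_closure h2)
  have hclos : ∀ x ∈ Subgroup.closure S, ∀ y ∈ Subgroup.closure S, Commute x y := by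
    intro x hx y hy
    induction hx, hy using Subgroup.closure_induction₂ with
    | mem x y hx hy => exact hcomm x hx y hy
    | one_left x hx => exact Commute.one_left x
    | one_right x hx => exact Commute.one_right x
    | mul_left x y z hx hy hz h1 h2 => exact h1.mul_left h2
    | mul_right y z x hy hz hx h1 h2 => exact h1.mul_right h2
    | inv_left x y hx hy h1 => exact h1.inv_left
    | inv_right x y hx hy h1 => exact h1.inv_right
  intro x hx y hy
  obtain ⟨h, hh, rfl⟩ := Subgroup.mem_map.mp hx
  obtain ⟨h', hh', rfl⟩ := Subgroup.mem_map.mp hy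
  exact hclos _ (hgen h hh) _ (hgen h' hh')

/-- The "twisted anti-diagonal" subgroup over an abelian subgroup. -/
def twistedSubgroup {G : Type} [Group G] (A : Subgroup G)
    (habel : ∀ x ∈ A, ∀ y ∈ A, x * y = y * x) (t : G) : Subgroup (G × G) where
  carrier := {p | p.1 ∈ A ∧ p.2 = t * p.1⁻¹ * t⁻¹}
  one_mem' := ⟨A.one_mem, by simp⟩
  mul_mem' := by
    rintro p q ⟨hp1, hp2⟩ ⟨hq1, hq2⟩
    refine ⟨A.mul_mem hp1 hq1, ?_⟩
    have h1 : (p * q).2 = p.2 * q.2 := rfl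
    have h2 : (p * q).1 = p.1 * q.1 := rfl
    rw [h1, h2, hp2, hq2]
    have h3 : (p.1 * q.1)⁻¹ = q.1⁻¹ * p.1⁻¹ := by group
    rw [h3, habel _ (A.inv_mem hq1) _ (A.inv_mem hp1)]
    group
  inv_mem' := by
    rintro p ⟨hp1, hp2⟩
    refine ⟨A.inv_mem hp1, ?_⟩
    have h1 : (p⁻¹).2 = p.2⁻¹ := rfl
    have h2 : (p⁻¹).1 = p.1⁻¹ := rfl
    rw [h1, h2, hp2]
    group

theorem antiDiagonal_mem_cosetRing_iff' (G : Type) [Group G] :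
    antiDiagonal G ∈ CosetRing (G × G) ↔
      ∃ A : Subgroup G, (∀ x ∈ A, ∀ y ∈ A, x * y = y * x) ∧ A.FiniteIndex := by
  classical
  constructor
  · -- forward direction
    intro hmem
    obtain ⟨Ps, hbasic, hU⟩ := isNF_of_mem_cosetRing hmem
    set s : Finset (Set (G × G)) := Ps.filter (fun P => P.Nonempty) with hsdef
    have key : ∀ P : Set (G × G), ∃ (d : G) (A : Subgroup G), P ∈ s →
        (({x : G | (x, x⁻¹) ∈ P} ⊆ d • (A : Set G)) ∧
          (∀ x ∈ A, ∀ y ∈ A, x * y = y * x)) := by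
      intro P
      by_cases hP : P ∈ s
      · have hPPs : P ∈ Ps := (Finset.mem_filter.mp hP).1
        have hPne : P.Nonempty := (Finset.mem_filter.mp hP).2
        have hPsub : P ⊆ antiDiagonal G := by
          rw [hU]
          exact Set.subset_sUnion_of_mem (Finset.mem_coe.mpr hPPs)
        obtain ⟨H, a, n, K, b, hle, hrel, hPeq⟩ := hbasic P hPPs
        obtain ⟨c, hcP⟩ := hPne
        have hcaH : c ∈ a • (H : Set (G × G)) := (hPeq ▸ hcP).1
        have hPeq' : P = c • (H : Set (G × G)) \ ⋃ i, b i • (K i : Set (G × G)) := by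
          rw [hPeq, coset_eq_of_mem hcaH]
        have hcG : c ∈ antiDiagonal G := hPsub hcP
        have habel := abelian_of_basic_subset_antiDiagonal hrel hcG (hPeq' ▸ hPsub)
        refine ⟨c.1, H.map (MonoidHom.fst G G), fun _ => ⟨?_, habel⟩⟩
        intro x hxP
        have hxH : ((x, x⁻¹) : G × G) ∈ c • (H : Set (G × G)) := by
          rw [hPeq'] at hxP
          exact hxP.1
        rw [Set.mem_smul_set_iff_inv_smul_mem, smul_eq_mul] at hxH
        rw [Set.mem_smul_set_iff_inv_smul_mem, smul_eq_mul]
        exact Subgroup.mem_map.mpr ⟨c⁻¹ * (x, x⁻¹), hxH, rfl⟩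
      · exact ⟨1, ⊥, fun h => absurd h hP⟩
    choose d A hdA using key
    have hcover : ⋃ P ∈ s, d P • ((A P : Subgroup G) : Set G) = Set.univ := by
      ext x
      simp only [Set.mem_iUnion, Set.mem_univ, iff_true]
      have hxG : ((x, x⁻¹) : G × G) ∈ antiDiagonal G := rfl
      rw [hU] at hxG
      obtain ⟨P, hPPs, hxP⟩ := hxG
      have hPs : P ∈ s := Finset.mem_filter.mpr ⟨Finset.mem_coe.mp hPPs, ⟨_, hxP⟩⟩
      exact ⟨P, hPs, (hdA P hPs).1 hxP⟩
    obtain ⟨P, hPs, hfin⟩ := Subgroup.exists_finiteIndex_of_leftCoset_cover hcover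
    exact ⟨A P, (hdA P hPs).2, hfin⟩
  · -- backward direction
    rintro ⟨A, habel, hfin⟩
    intro R hR
    obtain ⟨hcosets, hunion, hinter, hcompl⟩ := hR
    haveI : A.FiniteIndex := hfin
    haveI : Fintype (G ⧸ A) := Fintype.ofFinite _
    have hempty : (∅ : Set (G × G)) ∈ R := by
      have h0 := hcosets ⊥ 1
      have h1 := hinter _ _ h0 (hcompl _ h0)
      rwa [Set.inter_compl_self] at h1
    have hbiUnion : ∀ (t : Finset (G ⧸ A)) (f : G ⧸ A → Set (G × G)),
        (∀ q ∈ t, f q ∈ R) → (⋃ q ∈ t, f q) ∈ R := by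
      intro t
      induction t using Finset.induction_on with
      | empty => intro f _; simpa using hempty
      | insert q0 t0 hnotmem ih =>
        intro f hf
        rw [Finset.set_biUnion_insert]
        exact hunion _ _ (hf q0 (Finset.mem_insert_self q0 t0))
          (ih f fun q hq => hf q (Finset.mem_insert_of_mem hq))
    have hcov : antiDiagonal G = ⋃ q ∈ (Finset.univ : Finset (G ⧸ A)),
        ((Quotient.out q, (Quotient.out q)⁻¹) : G × G) •
          ((twistedSubgroup A habel (Quotient.out q) : Subgroup (G × G)) : Set (G × G)) := by
      ext p
      simp only [Set.mem_iUnion, Finset.mem_univ, true_and, Set.iUnion_true]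
      constructor
      · intro hp
        obtain ⟨y, y2⟩ := p
        have hy : y2 = y⁻¹ := hp
        subst hy
        set q : G ⧸ A := QuotientGroup.mk y with hq
        obtain ⟨α, hα⟩ := QuotientGroup.mk_out_eq_mul A y
        refine ⟨q, ?_⟩
        rw [Set.mem_smul_set_iff_inv_smul_mem, smul_eq_mul]
        constructor
        · show ((Quotient.out q, (Quotient.out q)⁻¹)⁻¹ * (y, y⁻¹)).1 ∈ A
          have : ((Quotient.out q, (Quotient.out q)⁻¹)⁻¹ * (y, y⁻¹)).1
              = (Quotient.out q)⁻¹ * y := rfl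
          rw [this, hα]
          have : (y * (α : G))⁻¹ * y = (α : G)⁻¹ := by group
          rw [this]
          exact A.inv_mem α.2
        · show ((Quotient.out q, (Quotient.out q)⁻¹)⁻¹ * (y, y⁻¹)).2
            = Quotient.out q * (((Quotient.out q, (Quotient.out q)⁻¹)⁻¹ * (y, y⁻¹)).1)⁻¹
              * (Quotient.out q)⁻¹
          have h1 : ((Quotient.out q, (Quotient.out q)⁻¹)⁻¹ * (y, y⁻¹)).2
              = Quotient.out q * y⁻¹ := by
            show ((Quotient.out q)⁻¹)⁻¹ * y⁻¹ = _
            rw [inv_inv]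
          have h2 : ((Quotient.out q, (Quotient.out q)⁻¹)⁻¹ * (y, y⁻¹)).1
              = (Quotient.out q)⁻¹ * y := rfl
          rw [h1, h2]
          group
      · rintro ⟨q, hq⟩
        rw [Set.mem_smul_set_iff_inv_smul_mem, smul_eq_mul] at hq
        obtain ⟨hq1, hq2⟩ := hq
        show p.2 = p.1⁻¹
        have e1 : ((Quotient.out q, (Quotient.out q)⁻¹)⁻¹ * p).1 = (Quotient.out q)⁻¹ * p.1 :=
          rfl
        have e2 : ((Quotient.out q, (Quotient.out q)⁻¹)⁻¹ * p).2 = Quotient.out q * p.2 := by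
          show ((Quotient.out q)⁻¹)⁻¹ * p.2 = _
          rw [inv_inv]
        rw [e1, e2] at hq2
        have : p.2 = (Quotient.out q)⁻¹ * (Quotient.out q * ((Quotient.out q)⁻¹ * p.1)⁻¹
            * (Quotient.out q)⁻¹) := by
          rw [← hq2]; group
        rw [this]; group
    rw [hcov]
    refine hbiUnion _ _ fun q _ => ?_
    have := hcosets (twistedSubgroup A habel (Quotient.out q))
      ((Quotient.out q, (Quotient.out q)⁻¹))
    rwa [image_mul_eq_smul] at this

/-- For a group `G`, the anti-diagonal `Γ_G` belongs to the coset ring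
`Ω(G × G)` if and only if `G` has an abelian subgroup of finite index. -/
theorem antiDiagonal_mem_cosetRing_iff (G : Type) [Group G] :
    antiDiagonal G ∈ CosetRing (G × G) ↔
      ∃ A : Subgroup G, (∀ x ∈ A, ∀ y ∈ A, x * y = y * x) ∧ A.FiniteIndex :=
  antiDiagonal_mem_cosetRing_iff' G
end

section
/- Let G be a group having an abelian subgroup A of finite index, and let x₁, …, xₙ ∈ G be representatives of the left cosets of A. For j = 1, …, n, set A_j := {(a, x_j a⁻¹ x_j⁻¹) : a ∈ A}. Then each A_j is a subgroup of G × G and Γ_G = ⋃_{j=1}^n (x_j, x_j⁻¹)·A_j; in particular, Γ_G belongs to the coset ring Ω(G × G). -/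
theorem antiDiagonal_eq_union_cosets_and_mem_cosetRing
    (G : Type) [Group G] (A : Subgroup G)
    (hA : ∀ x ∈ A, ∀ y ∈ A, x * y = y * x)
    (n : ℕ) (x : Fin n → G)
    (hrep : ∀ g : G, ∃! j : Fin n, (x j)⁻¹ * g ∈ A) :
    (∀ j : Fin n, ∃ Hj : Subgroup (G × G),
        (Hj : Set (G × G)) = (fun a => (a, x j * a⁻¹ * (x j)⁻¹)) '' (A : Set G)) ∧
    antiDiagonal G =
      ⋃ j : Fin n, (fun p => ((x j, (x j)⁻¹) : G × G) * p) ''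
        ((fun a => (a, x j * a⁻¹ * (x j)⁻¹)) '' (A : Set G)) ∧
    antiDiagonal G ∈ CosetRing (G × G) := by
  -- construction of the subgroups
  have hsub : ∀ j : Fin n, ∃ Hj : Subgroup (G × G),
      (Hj : Set (G × G)) = (fun a => (a, x j * a⁻¹ * (x j)⁻¹)) '' (A : Set G) := by
    intro j
    refine ⟨{ carrier := (fun a => (a, x j * a⁻¹ * (x j)⁻¹)) '' (A : Set G)
            , one_mem' := ⟨1, A.one_mem, by simp⟩
            , mul_mem' := ?_
            , inv_mem' := ?_ }, rfl⟩
    · rintro p q ⟨a, ha, rfl⟩ ⟨b, hb, rfl⟩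
      refine ⟨a * b, A.mul_mem ha hb, ?_⟩
      have hcomm : a⁻¹ * b⁻¹ = b⁻¹ * a⁻¹ := hA _ (A.inv_mem ha) _ (A.inv_mem hb)
      simp only [Prod.ext_iff, mul_inv_rev]
      constructor
      · rfl
      · show x j * (b⁻¹ * a⁻¹) * (x j)⁻¹ = x j * a⁻¹ * (x j)⁻¹ * (x j * b⁻¹ * (x j)⁻¹)
        rw [← hcomm]; group
    · rintro p ⟨a, ha, rfl⟩
      refine ⟨a⁻¹, A.inv_mem ha, ?_⟩
      simp only [Prod.ext_iff, Prod.inv_mk, inv_inv, true_and]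
      group
  -- the union equality
  have hunioneq : antiDiagonal G =
      ⋃ j : Fin n, (fun p => ((x j, (x j)⁻¹) : G × G) * p) ''
        ((fun a => (a, x j * a⁻¹ * (x j)⁻¹)) '' (A : Set G)) := by
    ext p
    constructor
    · intro hp
      obtain ⟨j, hj, -⟩ := hrep p.1
      refine Set.mem_iUnion.2 ⟨j, ⟨_, ⟨(x j)⁻¹ * p.1, hj, rfl⟩, ?_⟩⟩
      have hp2 : p.2 = p.1⁻¹ := hp
      have : p = (p.1, p.1⁻¹) := by rw [← hp2]
      rw [this]
      simp only [Prod.mk_mul_mk, Prod.mk.injEq, mul_inv_rev, inv_inv]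
      constructor
      · group
      · group
    · intro hp
      obtain ⟨j, ⟨q, ⟨a, ha, rfl⟩, rfl⟩⟩ := Set.mem_iUnion.1 hp
      show ((x j, (x j)⁻¹) * (a, x j * a⁻¹ * (x j)⁻¹) : G × G).2 = _
      simp only [Prod.mk_mul_mk, mul_inv_rev]
      group
  refine ⟨hsub, hunioneq, ?_⟩
  -- membership in the coset ring
  intro R hR
  obtain ⟨hcoset, hunion, hinter, hcompl⟩ := hR
  have huniv : (Set.univ : Set (G × G)) ∈ R := by
    have := hcoset ⊤ 1
    simpa using this
  have hempty : (∅ : Set (G × G)) ∈ R := by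
    have := hcompl _ huniv
    simpa using this
  set S : Fin n → Set (G × G) := fun j =>
    (fun p => ((x j, (x j)⁻¹) : G × G) * p) ''
      ((fun a => (a, x j * a⁻¹ * (x j)⁻¹)) '' (A : Set G)) with hS
  have hSmem : ∀ j, S j ∈ R := by
    intro j
    obtain ⟨Hj, hHj⟩ := hsub j
    have := hcoset Hj ((x j, (x j)⁻¹))
    rw [hHj] at this
    exact this
  have key : ∀ s : Finset (Fin n), (⋃ j ∈ s, S j) ∈ R := by
    intro s
    induction s using Finset.induction with
    | empty => simpa using hempty
    | insert _ _ h ih =>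
        rw [Finset.set_biUnion_insert]
        exact hunion _ _ (hSmem _) ih
  have : antiDiagonal G = ⋃ j ∈ (Finset.univ : Finset (Fin n)), S j := by
    rw [hunioneq]; simp [hS]
  rw [this]
  exact key _
end

section
/- Let G be a locally compact group, let N be a compact normal subgroup of G, and let π: G → G/N be the quotient map. Then the connected component of the identity of G/N equals π(G_e), and it is topologically isomorphic to G_e/(G_e ∩ N). -/
open MeasureTheory in
/-- The Haar measure on a locally compact group, with the Borel σ-algebra. -/
noncomputable def lcHaar (G : Type) [Group G] [TopologicalSpace G] [IsTopologicalGroup G]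
    [LocallyCompactSpace G] : @Measure G (borel G) :=
  letI : MeasurableSpace G := borel G
  letI : BorelSpace G := ⟨rfl⟩
  Measure.haar

open MeasureTheory in
/-- `f` is a coefficient function of the left regular representation of `G` on `L²(G)`,
i.e. `f` belongs to the Fourier algebra `A(G)`. -/
def MemFourier (G : Type) [Group G] [TopologicalSpace G] [IsTopologicalGroup G]
    [LocallyCompactSpace G] (f : G → ℂ) : Prop :=
  letI : MeasurableSpace G := borel G
  ∃ ξ η : G → ℂ, MemLp ξ 2 (lcHaar G) ∧ MemLp η 2 (lcHaar G) ∧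
    ∀ x : G, f x = ∫ y : G, ξ (x⁻¹ * y) * (starRingEnd ℂ) (η y) ∂(lcHaar G)

open MeasureTheory in
/-- The norm on the Fourier algebra `A(G)`:
`‖f‖ = inf {‖ξ‖₂ ‖η‖₂ : f = ⟨λ(·)ξ, η⟩}`. -/
noncomputable def fourierNorm (G : Type) [Group G] [TopologicalSpace G] [IsTopologicalGroup G]
    [LocallyCompactSpace G] (f : G → ℂ) : ℝ :=
  letI : MeasurableSpace G := borel G
  sInf { r : ℝ | ∃ ξ η : G → ℂ, MemLp ξ 2 (lcHaar G) ∧ MemLp η 2 (lcHaar G) ∧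
    (∀ x : G, f x = ∫ y : G, ξ (x⁻¹ * y) * (starRingEnd ℂ) (η y) ∂(lcHaar G)) ∧
    r = (eLpNorm ξ 2 (lcHaar G)).toReal * (eLpNorm η 2 (lcHaar G)).toReal }

section AmenabilityDefs

variable {A : Type} [CommRing A] [Algebra ℂ A]

/-- Amenability (in the sense of Johnson) for the subalgebra `{f | P f}` of the commutative
algebra `A`, equipped with the norm function `N`: every bounded derivation into the dual of a
Banach `P`-bimodule is inner.  Module actions and derivations are given as functions defined on
all of `A` but subject to algebraic and boundedness conditions only on `P`. -/
def IsBanachAlgAmenable (P : A → Prop) (N : A → ℝ) : Prop :=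
  ∀ (E : Type) [NormedAddCommGroup E] [NormedSpace ℂ E] [CompleteSpace E]
    (l r : A → E →L[ℂ] E),
    (∀ f g, P f → P g → l (f + g) = l f + l g) →
    (∀ (c : ℂ) (f), P f → l (c • f) = c • l f) →
    (∀ f g, P f → P g → r (f + g) = r f + r g) →
    (∀ (c : ℂ) (f), P f → r (c • f) = c • r f) →
    (∃ C : ℝ, ∀ f, P f → ‖l f‖ ≤ C * N f) →
    (∃ C : ℝ, ∀ f, P f → ‖r f‖ ≤ C * N f) →
    (∀ f g, P f → P g → l (f * g) = (l f).comp (l g)) →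
    (∀ f g, P f → P g → r (f * g) = (r g).comp (r f)) →
    (∀ f g, P f → P g → (l f).comp (r g) = (r g).comp (l f)) →
    ∀ D : A → (E →L[ℂ] ℂ),
      (∀ f g, P f → P g → D (f + g) = D f + D g) →
      (∀ (c : ℂ) (f), P f → D (c • f) = c • D f) →
      (∃ C : ℝ, ∀ f, P f → ‖D f‖ ≤ C * N f) →
      (∀ f g, P f → P g → D (f * g) = (D g).comp (r f) + (D f).comp (l g)) →
      ∃ φ : E →L[ℂ] ℂ, ∀ f, P f → D f = φ.comp (r f) - φ.comp (l f)

/-- Weak amenability for the commutative subalgebra `{f | P f}` of `A` with norm function `N`: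
every bounded derivation into a symmetric Banach bimodule vanishes. -/
def IsBanachAlgWeaklyAmenable (P : A → Prop) (N : A → ℝ) : Prop :=
  ∀ (E : Type) [NormedAddCommGroup E] [NormedSpace ℂ E] [CompleteSpace E]
    (m : A → E →L[ℂ] E),
    (∀ f g, P f → P g → m (f + g) = m f + m g) →
    (∀ (c : ℂ) (f), P f → m (c • f) = c • m f) →
    (∃ C : ℝ, ∀ f, P f → ‖m f‖ ≤ C * N f) →
    (∀ f g, P f → P g → m (f * g) = (m f).comp (m g)) →
    ∀ D : A → E,
      (∀ f g, P f → P g → D (f + g) = D f + D g) →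
      (∀ (c : ℂ) (f), P f → D (c • f) = c • D f) →
      (∃ C : ℝ, ∀ f, P f → ‖D f‖ ≤ C * N f) →
      (∀ f g, P f → P g → D (f * g) = m f (D g) + m g (D f)) →
      ∀ f, P f → D f = 0

end AmenabilityDefs

/-- The Fourier algebra `A(G)` is amenable. -/
def FourierAmenable (G : Type) [Group G] [TopologicalSpace G] [IsTopologicalGroup G]
    [LocallyCompactSpace G] : Prop :=
  IsBanachAlgAmenable (MemFourier G) (fourierNorm G)

/-- The Fourier algebra `A(G)` is weakly amenable. -/
def FourierWeaklyAmenable (G : Type) [Group G] [TopologicalSpace G] [IsTopologicalGroup G]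
    [LocallyCompactSpace G] : Prop :=
  IsBanachAlgWeaklyAmenable (MemFourier G) (fourierNorm G)

/-- The Fourier algebra `A(G)` is hereditarily weakly amenable: `A(G/K)` is weakly amenable
for every compact normal subgroup `K` of `G`. -/
def FourierHereditarilyWeaklyAmenable (G : Type) [Group G] [TopologicalSpace G]
    [IsTopologicalGroup G] [LocallyCompactSpace G] : Prop :=
  ∀ (K : Subgroup G) (hK : K.Normal), IsCompact (K : Set G) →
    letI := hK
    FourierWeaklyAmenable (G ⧸ K)

section AuxTopology

open Set Topology Pointwise
section CompAux

variable {G : Type*} [Group G] [TopologicalSpace G] [IsTopologicalGroup G]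

lemma myConnectedComponent_eq_mul (x : G) :
    connectedComponent x = (x * ·) '' connectedComponent (1 : G) := by
  apply Set.Subset.antisymm
  · intro y hy
    refine ⟨x⁻¹ * y, ?_, by simp⟩
    have h := (continuous_mul_left x⁻¹).image_connectedComponent_subset x
    simp only [inv_mul_cancel] at h
    exact h ⟨y, hy, rfl⟩
  · have h := (continuous_mul_left x).image_connectedComponent_subset 1
    simpa using h

lemma myConnectedComponentOfOne_normal : (Subgroup.connectedComponentOfOne G).Normal := by
  constructor
  intro n hn g
  have hc : Continuous fun x : G => g * x * g⁻¹ :=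
    (continuous_mul_left g).mul continuous_const
  have h := hc.image_connectedComponent_subset 1
  simp only [mul_one, mul_inv_cancel] at h
  exact h ⟨n, hn, rfl⟩

lemma my_mk_eq_mk_iff_comp {x y : G} :
    (QuotientGroup.mk x : G ⧸ Subgroup.connectedComponentOfOne G) = QuotientGroup.mk y ↔
      y ∈ connectedComponent x := by
  rw [QuotientGroup.eq, myConnectedComponent_eq_mul x]
  constructor
  · intro h
    exact ⟨x⁻¹ * y, h, by simp⟩
  · rintro ⟨z, hz, rfl⟩
    simp only [inv_mul_cancel_left]; exact hz

lemma my_comp_one_quotient :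
    haveI := myConnectedComponentOfOne_normal (G := G)
    connectedComponent (1 : G ⧸ Subgroup.connectedComponentOfOne G) = {1} := by
  haveI := myConnectedComponentOfOne_normal (G := G)
  set G₀ := Subgroup.connectedComponentOfOne G with hG₀
  set C := connectedComponent (1 : G ⧸ G₀) with hC
  set P := (QuotientGroup.mk : G → G ⧸ G₀) ⁻¹' C with hP
  have hsat : ∀ x ∈ P, connectedComponent x ⊆ P := by
    intro x hx y hy
    have h : (QuotientGroup.mk x : G ⧸ G₀) = QuotientGroup.mk y :=
      my_mk_eq_mk_iff_comp.mpr hy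
    show (QuotientGroup.mk y : G ⧸ G₀) ∈ C
    rw [← h]; exact hx
  have hPpre : IsPreconnected P := by
    intro U V hU hV hcov ⟨u, huP, huU⟩ ⟨v, hvP, hvV⟩
    by_contra hempty
    rw [Set.not_nonempty_iff_eq_empty] at hempty
    have hmkU : IsOpen ((QuotientGroup.mk : G → G ⧸ G₀) '' U) :=
      QuotientGroup.isOpenMap_coe U hU
    have hmkV : IsOpen ((QuotientGroup.mk : G → G ⧸ G₀) '' V) :=
      QuotientGroup.isOpenMap_coe V hV
    have hcover : C ⊆ (QuotientGroup.mk '' U) ∪ (QuotientGroup.mk '' V) := by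
      intro c hc
      obtain ⟨x, rfl⟩ := QuotientGroup.mk_surjective c
      rcases hcov hc with hxU | hxV
      · exact Or.inl ⟨x, hxU, rfl⟩
      · exact Or.inr ⟨x, hxV, rfl⟩
    obtain ⟨c, hcC, hcU, hcV⟩ := isPreconnected_connectedComponent
      (u := QuotientGroup.mk '' U) (v := QuotientGroup.mk '' V) hmkU hmkV hcover
      ⟨QuotientGroup.mk u, huP, ⟨u, huU, rfl⟩⟩
      ⟨QuotientGroup.mk v, hvP, ⟨v, hvV, rfl⟩⟩
    obtain ⟨a, haU, hac⟩ := hcU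
    obtain ⟨b, hbV, hbc⟩ := hcV
    have haP : a ∈ P := by show _ ∈ C; rw [hac]; exact hcC
    have hab : b ∈ connectedComponent a := my_mk_eq_mk_iff_comp.mp (hac.trans hbc.symm)
    have hsub : connectedComponent a ⊆ P := hsat a haP
    obtain ⟨y, hy1, hy2⟩ := isPreconnected_connectedComponent (x := a) U V hU hV
      (hsub.trans hcov) ⟨a, mem_connectedComponent, haU⟩ ⟨b, hab, hbV⟩
    exact absurd hempty (Set.nonempty_iff_ne_empty.mp ⟨y, hsub hy1, hy2⟩)
  have h1P : (1 : G) ∈ P := by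
    show (QuotientGroup.mk 1 : G ⧸ G₀) ∈ C
    rw [QuotientGroup.mk_one]
    exact mem_connectedComponent
  have hPsub : P ⊆ connectedComponent (1 : G) := hPpre.subset_connectedComponent h1P
  apply Set.Subset.antisymm
  · intro c hc
    obtain ⟨x, rfl⟩ := QuotientGroup.mk_surjective c
    have : x ∈ G₀ := hPsub hc
    simpa using (QuotientGroup.eq_one_iff x).mpr this
  · intro c hc
    rw [Set.mem_singleton_iff] at hc
    rw [hc]
    exact mem_connectedComponent

lemma my_totallyDisconnected_quotient :
    haveI := myConnectedComponentOfOne_normal (G := G)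
    TotallyDisconnectedSpace (G ⧸ Subgroup.connectedComponentOfOne G) := by
  haveI := myConnectedComponentOfOne_normal (G := G)
  rw [totallyDisconnectedSpace_iff_connectedComponent_singleton]
  intro x
  rw [myConnectedComponent_eq_mul x, my_comp_one_quotient]
  simp

end CompAux

lemma my_exists_isCompact_isClopen {X : Type*} [TopologicalSpace X]
    [LocallyCompactSpace X] [T2Space X] [TotallyDisconnectedSpace X]
    {M O : Set X} (hM : IsCompact M) (hO : IsOpen O) (hMO : M ⊆ O) :
    ∃ W : Set X, IsCompact W ∧ IsClopen W ∧ M ⊆ W ∧ W ⊆ O := by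
  have key : ∀ x ∈ M, ∃ V : Set X, IsClopen V ∧ IsCompact V ∧ x ∈ V ∧ V ⊆ O := by
    intro x hx
    obtain ⟨K, hKc, hxK, hKO⟩ := exists_compact_subset hO (hMO hx)
    obtain ⟨V, hVclopen, hxV, hVsub⟩ :=
      loc_compact_Haus_tot_disc_of_zero_dim.exists_subset_of_mem_open hxK isOpen_interior
    exact ⟨V, hVclopen, hKc.of_isClosed_subset hVclopen.isClosed
      (hVsub.trans interior_subset), hxV, (hVsub.trans interior_subset).trans hKO⟩
  choose! V hVclopen hVcomp hVmem hVsub using key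
  obtain ⟨t, htM, htcov⟩ := hM.elim_nhds_subcover V
    (fun x hx => (hVclopen x hx).isOpen.mem_nhds (hVmem x hx))
  refine ⟨⋃ x ∈ t, V x, ?_, ?_, htcov, ?_⟩
  · exact t.finite_toSet.isCompact_biUnion (fun x hx => hVcomp x (htM x hx))
  · exact isClopen_biUnion_finset (fun x hx => hVclopen x (htM x hx))
  · exact Set.iUnion₂_subset (fun x hx => hVsub x (htM x hx))

variable {G : Type*} [TopologicalSpace G] [Group G] [IsTopologicalGroup G]

lemma my_exist_mul_closure_nhd {W : Set G} (hWc : IsCompact W) (hWo : IsOpen W) :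
    ∃ T ∈ 𝓝 (1 : G), W * T ⊆ W := by
  apply hWc.induction_on (p := fun S ↦ ∃ T ∈ 𝓝 (1 : G), S * T ⊆ W)
    ⟨Set.univ, by simp only [Filter.univ_mem, Set.empty_mul, Set.empty_subset, and_self]⟩
    (fun _ _ huv ⟨T, hT, mem⟩ ↦ ⟨T, hT, (Set.mul_subset_mul_right huv).trans mem⟩)
    fun U V ⟨T₁, hT₁, mem1⟩ ⟨T₂, hT₂, mem2⟩ ↦ ⟨T₁ ∩ T₂, Filter.inter_mem hT₁ hT₂, by
      rw [Set.union_mul]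
      exact Set.union_subset ((Set.mul_subset_mul_left Set.inter_subset_left).trans mem1)
        ((Set.mul_subset_mul_left Set.inter_subset_right).trans mem2)⟩
  intro x memW
  have : (x, 1) ∈ (fun p : G × G ↦ p.1 * p.2) ⁻¹' W := by simp [memW]
  rcases isOpen_prod_iff.mp (continuous_mul.isOpen_preimage W hWo) x 1 this with
    ⟨U, V, Uopen, Vopen, xmemU, onememV, prodsub⟩
  have h6 : U * V ⊆ W := Set.mul_subset_iff.mpr (fun _ hx _ hy ↦ prodsub (Set.mk_mem_prod hx hy))
  exact ⟨U ∩ W, ⟨U, Uopen.mem_nhds xmemU, W, fun _ a ↦ a, rfl⟩,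
    V, Vopen.mem_nhds onememV, fun _ a ↦ h6 ((Set.mul_subset_mul_right Set.inter_subset_left) a)⟩

/-- In a locally compact totally disconnected Hausdorff group, a compact normal subgroup
and a point outside it can be separated by an open subgroup containing the subgroup. -/
lemma my_exists_openSubgroup {E : Type*} [Group E] [TopologicalSpace E] [IsTopologicalGroup E]
    [LocallyCompactSpace E] [T2Space E] [TotallyDisconnectedSpace E]
    (M : Subgroup E) (hMn : M.Normal) (hMc : IsCompact (M : Set E))
    (x : E) (hx : x ∉ M) :
    ∃ U : Subgroup E, IsOpen (U : Set E) ∧ (M : Set E) ⊆ U ∧ x ∉ U := by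
  haveI := hMn
  -- the compact set of "bad" points
  set B : Set E := (fun m : E => m⁻¹ * x) '' (M : Set E) with hB
  have hBc : IsCompact B := hMc.image (by continuity)
  have hMB : Disjoint (M : Set E) B := by
    rw [Set.disjoint_left]
    rintro y hyM ⟨m, hmM, rfl⟩
    exact hx (by simpa using M.mul_mem hmM (M.mul_mem (M.inv_mem hmM) (M.mul_mem hmM hyM))) -- fix
  have hMBc : (M : Set E) ⊆ Bᶜ := fun y hy => (Set.disjoint_left.mp hMB hy)
  obtain ⟨W, hWc, hWclopen, hMW, hWB⟩ :=
    my_exists_isCompact_isClopen hMc hBc.isClosed.isOpen_compl hMBc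
  obtain ⟨T, hTnhds, hTmul⟩ := my_exist_mul_closure_nhd hWc hWclopen.isOpen
  obtain ⟨T', hT'sub, hT'open, hT'one⟩ := mem_nhds_iff.mp hTnhds
  set V : Set E := T' ∩ T'⁻¹ with hV
  have hVopen : IsOpen V := hT'open.inter hT'open.inv
  have hVone : (1 : E) ∈ V := ⟨hT'one, by simpa using hT'one⟩
  have hVinv : V⁻¹ = V := by
    ext y
    simp only [hV, Set.mem_inter_iff, Set.mem_inv]
    constructor <;> rintro ⟨h1, h2⟩ <;> exact ⟨by simpa using h2, by simpa using h1⟩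
  have hVT : V ⊆ T := fun y hy => hT'sub hy.1
  have hWone : (1 : E) ∈ W := hMW M.one_mem
  -- powers of V stay in W
  have hWpow : ∀ n : ℕ, W * V ^ (n + 1) ⊆ W := by
    intro n
    induction n with
    | zero => simpa using (Set.mul_subset_mul_left hVT).trans hTmul
    | succ n ih =>
      rw [pow_succ, ← mul_assoc]
      exact ((Set.mul_subset_mul_right ih).trans
        ((Set.mul_subset_mul_left hVT).trans hTmul))
  have hpowW : ∀ n : ℕ, V ^ (n + 1) ⊆ W := by
    intro n y hy
    exact hWpow n ⟨1, hWone, y, hy, one_mul y⟩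
  -- the open subgroup generated by V
  set S : Subgroup E :=
    { carrier := ⋃ n, V ^ (n + 1)
      mul_mem' := fun ha hb ↦ by
        rcases Set.mem_iUnion.mp ha with ⟨k, hk⟩
        rcases Set.mem_iUnion.mp hb with ⟨l, hl⟩
        apply Set.mem_iUnion.mpr
        exact ⟨k + 1 + l, by rw [add_assoc, pow_add]; exact Set.mul_mem_mul hk hl⟩
      one_mem' := Set.mem_iUnion.mpr ⟨0, by simpa using hVone⟩
      inv_mem' := fun ha ↦ by
        rcases Set.mem_iUnion.mp ha with ⟨k, hk⟩
        apply Set.mem_iUnion.mpr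
        refine ⟨k, ?_⟩
        rw [← hVinv]
        simpa only [inv_pow, Set.mem_inv, inv_inv] using hk } with hS
  have hSopen : IsOpen (S : Set E) := by
    refine isOpen_iUnion (fun n ↦ ?_)
    rw [pow_succ]
    exact hVopen.mul_left
  have hSW : (S : Set E) ⊆ W := Set.iUnion_subset hpowW
  refine ⟨M ⊔ S, ?_, ?_, ?_⟩
  · exact Subgroup.isOpen_mono le_sup_right hSopen
  · exact SetLike.coe_subset_coe.mpr le_sup_left
  · intro hxU
    rw [← SetLike.mem_coe, Subgroup.normal_mul] at hxU
    obtain ⟨m, hm, s, hs, rfl⟩ := hxU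
    have : s ∈ B := ⟨m, hm, by group⟩
    exact hWB (hSW hs) this

lemma my_main_part1 (G : Type*) [Group G] [TopologicalSpace G] [IsTopologicalGroup G]
    [LocallyCompactSpace G] [T2Space G]
    (N : Subgroup G) (hN : N.Normal) (hNcomp : IsCompact (N : Set G)) :
    haveI := hN
    connectedComponent ((1 : G) : G ⧸ N) = QuotientGroup.mk '' connectedComponent (1 : G) := by
  haveI := hN
  apply Set.Subset.antisymm
  · intro q hq
    obtain ⟨g, rfl⟩ := QuotientGroup.mk_surjective q
    set G₀ := Subgroup.connectedComponentOfOne G with hG₀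
    haveI hG₀n : G₀.Normal := myConnectedComponentOfOne_normal (G := G)
    haveI hG₀cl : IsClosed (G₀ : Set G) := isClosed_connectedComponent
    haveI := my_totallyDisconnected_quotient (G := G)
    set M : Subgroup (G ⧸ G₀) := Subgroup.map (QuotientGroup.mk' G₀) N with hM
    have hMn : M.Normal := hN.map _ (QuotientGroup.mk'_surjective G₀)
    have hMc : IsCompact (M : Set (G ⧸ G₀)) := by
      rw [hM, Subgroup.coe_map]
      exact hNcomp.image continuous_quot_mk
    by_cases hg : g ∈ (G₀ ⊔ N : Subgroup G)
    · rw [← SetLike.mem_coe, Subgroup.mul_normal] at hg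
      obtain ⟨c, hc, n, hn, rfl⟩ := hg
      refine ⟨c, hc, ?_⟩
      rw [QuotientGroup.eq]
      simpa using hn
    · exfalso
      have hgM : (QuotientGroup.mk g : G ⧸ G₀) ∉ M := by
        intro hmem
        rw [hM, Subgroup.mem_map] at hmem
        obtain ⟨n, hn, heq⟩ := hmem
        apply hg
        have h1 : n⁻¹ * g ∈ G₀ := QuotientGroup.eq.mp heq
        have h2 : g = n * (n⁻¹ * g) := by group
        rw [h2]
        exact Subgroup.mul_mem _ (Subgroup.mem_sup_right hn) (Subgroup.mem_sup_left h1)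
      obtain ⟨U', hU'open, hMU', hgU'⟩ := my_exists_openSubgroup M hMn hMc _ hgM
      set U : Subgroup G := U'.comap (QuotientGroup.mk' G₀) with hU
      have hUopen : IsOpen (U : Set G) := hU'open.preimage continuous_quot_mk
      have hNU : ∀ n, n ∈ N → n ∈ U := by
        intro n hn
        show QuotientGroup.mk' G₀ n ∈ U'
        exact hMU' ⟨n, hn, rfl⟩
      have hgU : g ∉ U := fun h => hgU' h
      have hsat : ∀ a b : G, (QuotientGroup.mk a : G ⧸ N) = QuotientGroup.mk b →
          a ∈ U → b ∈ U := by
        intro a b hab ha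
        have h1 : a⁻¹ * b ∈ N := QuotientGroup.eq.mp hab
        have h2 : b = a * (a⁻¹ * b) := by group
        rw [h2]
        exact U.mul_mem ha (hNU _ h1)
      set A : Set (G ⧸ N) := QuotientGroup.mk '' (U : Set G) with hA
      have hAopen : IsOpen A := QuotientGroup.isOpenMap_coe _ hUopen
      have hAcompl : Aᶜ = QuotientGroup.mk '' ((U : Set G)ᶜ) := by
        ext q
        constructor
        · intro hq2
          obtain ⟨a, rfl⟩ := QuotientGroup.mk_surjective q
          refine ⟨a, fun haU => hq2 ⟨a, haU, rfl⟩, rfl⟩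
        · rintro ⟨a, haU, rfl⟩ ⟨u, huU, hequ⟩
          exact haU (hsat u a hequ huU)
      have hAclosed : IsClosed A := by
        rw [← isOpen_compl_iff, hAcompl]
        exact QuotientGroup.isOpenMap_coe _ (U.isClosed_of_isOpen hUopen).isOpen_compl
      have h1A : (1 : G ⧸ N) ∈ A := ⟨1, U.one_mem, rfl⟩
      have := (IsClopen.connectedComponent_subset ⟨hAclosed, hAopen⟩ h1A) hq
      obtain ⟨u, huU, hequ⟩ := this
      exact hgU (hsat u g hequ huU)
  · simpa using (QuotientGroup.continuous_mk (N := N)).image_connectedComponent_subset 1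


end AuxTopology

/-- Let `G` be a locally compact group, `N` a compact normal subgroup and
`π : G → G/N` the quotient map.  Then the identity component of `G/N` is the image `π(G_e)` of
the identity component of `G`, and it is topologically isomorphic to `G_e/(G_e ∩ N)`. -/
theorem identityComponent_quotient_eq_image_and_iso
    (G : Type) [Group G] [TopologicalSpace G] [IsTopologicalGroup G]
    [LocallyCompactSpace G] [T2Space G]
    (N : Subgroup G) (hN : N.Normal) (hNcomp : IsCompact (N : Set G)) :
    letI := hN
    (connectedComponent ((1 : G) : G ⧸ N) =
        QuotientGroup.mk '' connectedComponent (1 : G)) ∧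
    (letI Ge := Subgroup.connectedComponentOfOne G
     letI Qe := Subgroup.connectedComponentOfOne (G ⧸ N)
     haveI : (N.subgroupOf Ge).Normal := hN.subgroupOf Ge
     ∃ φ : (Ge ⧸ N.subgroupOf Ge) ≃ Qe,
       (∀ a b : Ge ⧸ N.subgroupOf Ge, φ (a * b) = φ a * φ b) ∧
       Continuous φ ∧ Continuous φ.symm) := by

  haveI := hN
  have part1 := my_main_part1 G N hN hNcomp
  have part1' : connectedComponent (1 : G ⧸ N) =
      QuotientGroup.mk '' connectedComponent (1 : G) := by
    rw [← QuotientGroup.mk_one]; exact part1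
  refine ⟨part1, ?_⟩
  set Ge := Subgroup.connectedComponentOfOne G with hGe
  set Qe := Subgroup.connectedComponentOfOne (G ⧸ N) with hQe
  haveI hNGe : (N.subgroupOf Ge).Normal := hN.subgroupOf Ge
  have hmem : ∀ g : Ge, (QuotientGroup.mk (g : G) : G ⧸ N) ∈ Qe := by
    intro g
    show _ ∈ connectedComponent (1 : G ⧸ N)
    rw [part1']
    exact ⟨(g : G), g.2, rfl⟩
  set f : Ge →* Qe := ((QuotientGroup.mk' N).comp Ge.subtype).codRestrict Qe hmem with hf
  have hfval : ∀ g : Ge, ((f g : Qe) : G ⧸ N) = QuotientGroup.mk (g : G) := fun g => rfl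
  have hfcont : Continuous f :=
    Continuous.subtype_mk (QuotientGroup.continuous_mk.comp continuous_subtype_val) _
  have hker : f.ker = N.subgroupOf Ge := by
    ext g
    simp only [MonoidHom.mem_ker, Subgroup.mem_subgroupOf]
    constructor
    · intro h
      have h2 : ((f g : Qe) : G ⧸ N) = 1 := by rw [h]; rfl
      rw [hfval] at h2
      exact (QuotientGroup.eq_one_iff _).mp h2
    · intro h
      apply Subtype.ext
      rw [hfval]
      exact (QuotientGroup.eq_one_iff _).mpr h
  have hfsurj : Function.Surjective f := by
    rintro ⟨q, hq⟩
    have hq' : q ∈ connectedComponent (1 : G ⧸ N) := hq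
    rw [part1'] at hq'
    obtain ⟨g, hg, rfl⟩ := hq'
    exact ⟨⟨g, hg⟩, rfl⟩
  set ψ : (Ge ⧸ N.subgroupOf Ge) ≃* Qe :=
    (QuotientGroup.quotientMulEquivOfEq hker.symm).trans
      (QuotientGroup.quotientKerEquivOfSurjective f hfsurj) with hψ
  have hψmk : ∀ g : Ge, ψ (QuotientGroup.mk g) = f g := fun g => rfl
  have hψcont : Continuous ψ := by
    rw [(QuotientGroup.isQuotientMap_mk (N.subgroupOf Ge)).continuous_iff]
    have : (⇑ψ ∘ QuotientGroup.mk) = ⇑f := funext hψmk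
    rw [this]
    exact hfcont
  have hGecl : IsClosed (Ge : Set G) := isClosed_connectedComponent
  have hval : Topology.IsClosedEmbedding (Subtype.val : Ge → G) :=
    hGecl.isClosedEmbedding_subtypeVal
  have hψsymmcont : Continuous ψ.symm := by
    rw [continuous_iff_isClosed]
    intro C hC
    have hD : IsClosed ((QuotientGroup.mk : Ge → Ge ⧸ N.subgroupOf Ge) ⁻¹' C) :=
      hC.preimage QuotientGroup.continuous_mk
    set D := (QuotientGroup.mk : Ge → Ge ⧸ N.subgroupOf Ge) ⁻¹' C with hDdef
    have key : (⇑ψ.symm) ⁻¹' C =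
        (Subtype.val : Qe → G ⧸ N) ⁻¹'
          ((QuotientGroup.mk : G → G ⧸ N) '' (Subtype.val '' D)) := by
      ext q
      constructor
      · intro hd
        obtain ⟨g, hgd⟩ := QuotientGroup.mk_surjective (ψ.symm q)
        have hgD : g ∈ D := by
          show QuotientGroup.mk g ∈ C
          rw [hgd]; exact hd
        have hq : (q : G ⧸ N) = QuotientGroup.mk (g : G) := by
          have h1 : ψ (QuotientGroup.mk g) = q := by rw [hgd]; exact ψ.apply_symm_apply q
          rw [hψmk] at h1
          rw [← h1, hfval]
        exact ⟨(g : G), ⟨g, hgD, rfl⟩, hq.symm⟩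
      · rintro ⟨x, ⟨g, hgD, rfl⟩, heq⟩
        have hfg : f g = q := Subtype.ext heq
        show ψ.symm q ∈ C
        have : ψ.symm q = QuotientGroup.mk g := by
          rw [← hfg, ← hψmk g]
          exact ψ.symm_apply_apply _
        rw [this]
        exact hgD
    rw [key]
    exact ((QuotientGroup.isClosedMap_coe hNcomp) _ (hval.isClosedMap D hD)).preimage
      continuous_subtype_val
  exact ⟨ψ.toEquiv, fun a b => ψ.map_mul a b, hψcont, hψsymmcont⟩
end
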